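/- The commutation matrix satisfies K^n = (S_D^n)ᵀS_D^n + (S_L^n)ᵀS_U^n + (S_U^n)ᵀS_L^n, where S_D^n, S_L^n, S_U^n are the diagonal, strictly lower, and strictly upper triangular selection matrices. -/

import Mathlib

open Matrix

/-- The commutation matrix `K^n`. -/
def commMat (n : ℕ) : Matrix (Fin n × Fin n) (Fin n × Fin n) ℝ :=
  fun p q => if q = (p.2, p.1) then 1 else 0

/-- Index set for strictly lower triangular positions (cardinality `n(n-1)/2`). -/
def LowIdx (n : ℕ) := {p : Fin n × Fin n // p.1 < p.2}

instance (n : ℕ) : Fintype (LowIdx n) := by unfold LowIdx; infer_instance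
instance (n : ℕ) : DecidableEq (LowIdx n) := by unfold LowIdx; infer_instance

/-- The diagonal selection matrix `S_D^n`. -/
def selD (n : ℕ) : Matrix (Fin n) (Fin n × Fin n) ℝ :=
  fun i q => if q = (i, i) then 1 else 0

/-- The strictly-lower-triangular selection matrix `S_L^n`. -/
def selL (n : ℕ) : Matrix (LowIdx n) (Fin n × Fin n) ℝ :=
  fun k q => if q = k.val then 1 else 0

/-- The strictly-upper-triangular selection matrix `S_U^n`. -/
def selU (n : ℕ) : Matrix (LowIdx n) (Fin n × Fin n) ℝ :=
  fun k q => if q = (k.val.2, k.val.1) then 1 else 0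

lemma sumD (n : ℕ) (p q : Fin n × Fin n) :
    ∑ i : Fin n, (if p = (i, i) then (1:ℝ) else 0) * (if q = (i, i) then 1 else 0)
      = if p.1 = p.2 ∧ q = p then 1 else 0 := by
  rcases p with ⟨a, b⟩
  by_cases h : a = b
  · subst h
    rw [Finset.sum_eq_single a]
    · simp [Prod.ext_iff]
    · intro i _ hi
      simp [Prod.ext_iff, Ne.symm hi]
    · simp
  · rw [Finset.sum_eq_zero]
    · simp [h]
    · intro i _
      simp only [Prod.mk.injEq]
      have : (a, b) ≠ (i, i) := by
        intro hh
        injection hh with h1 h2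
        exact h (h1.trans h2.symm)
      have h2 : ¬(a = i ∧ b = i) := fun hh => h (hh.1.trans hh.2.symm)
      rw [if_neg h2, zero_mul]

lemma sumSub (n : ℕ) (p : Fin n × Fin n) (g : LowIdx n → ℝ) (hp : p.1 < p.2) :
    ∑ k : LowIdx n, (if p = k.val then (1:ℝ) else 0) * g k = g ⟨p, hp⟩ :=
  (Fintype.sum_eq_single (⟨p, hp⟩ : LowIdx n) (fun k hk => by
    have : p ≠ k.val := fun h => hk (Subtype.ext h.symm)
    simp [this])).trans (by simp)

lemma sumSubZero (n : ℕ) (p : Fin n × Fin n) (g : LowIdx n → ℝ) (hp : ¬ p.1 < p.2) :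
    ∑ k : LowIdx n, (if p = k.val then (1:ℝ) else 0) * g k = 0 := by
  apply Finset.sum_eq_zero
  intro k _
  have : p ≠ k.val := by rintro rfl; exact hp k.property
  simp [this]

theorem stmt_16 (n : ℕ) :
    commMat n = (selD n)ᵀ * selD n + (selL n)ᵀ * selU n + (selU n)ᵀ * selL n := by
  ext p q
  simp only [Matrix.add_apply, mul_apply, transpose_apply, commMat, selD, selL, selU]
  rw [sumD]
  have hU : ∑ k : LowIdx n, (if p = (k.val.2, k.val.1) then (1:ℝ) else 0) *
      (if q = k.val then 1 else 0)
      = ∑ k : LowIdx n, (if (p.2, p.1) = k.val then (1:ℝ) else 0) *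
      (if q = k.val then 1 else 0) := by
    apply Finset.sum_congr rfl
    intro k _
    congr 1
    simp [Prod.ext_iff, and_comm]
  rw [hU]
  rcases p with ⟨a, b⟩
  rcases lt_trichotomy a b with h | h | h
  · rw [sumSub n (a, b) _ h, sumSubZero n (b, a) _ (by simpa using h.le.not_gt)]
    have : ¬ a = b := h.ne
    simp [this, commMat, Prod.ext_iff, eq_comm, and_comm]
  · subst h
    rw [sumSubZero n (a, a) _ (lt_irrefl a), sumSubZero n (a, a) _ (lt_irrefl a)]
    simp [Prod.ext_iff, and_comm, eq_comm]
  · rw [sumSubZero n (a, b) _ (by simpa using h.le.not_gt), sumSub n (b, a) _ h]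
    have : ¬ a = b := h.ne'
    simp [this, Prod.ext_iff, eq_comm, and_comm]
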